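/- Let c ∈ ℝ, let g : [0,1] → ℝ be continuous satisfying (g*) and (g₁), let J ⊂ ℝ be a compact interval, and let b ∈ L¹(J). Then for every ε ∈ (0,1) there exists R_ε = R_ε(c,g,J,b) ∈ (0,1) such that for every θ ∈ (0,1] and every solution u of u'' + cu' + θb(x)g(u) = 0 on J with 0 ≤ u(x) ≤ 1 for all x ∈ J, if u(x̂) ≥ R_ε and u'(x̂) = 0 for some x̂ ∈ J, then u(x) ≥ 1 − ε and |u'(x)| ≤ ε for all x ∈ J. -/

import Mathlib

open MeasureTheory Set Filter Topology

noncomputable section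

/-- Carathéodory solution of `u'' + c u' + h(x, u(x)) = 0` on `J`:
`u` is C¹ on `J` with derivative `u'`, which is (locally) absolutely continuous with
a.e.-derivative `u''`, and the equation holds a.e. on `J`. -/
def CaraSol (c : ℝ) (h : ℝ → ℝ → ℝ) (u u' : ℝ → ℝ) (J : Set ℝ) : Prop :=
  (∀ x ∈ J, HasDerivWithinAt u (u' x) J x) ∧
  ContinuousOn u' J ∧
  ∃ u'' : ℝ → ℝ,
    (∀ x ∈ J, ∀ y ∈ J, u' y - u' x = ∫ t in x..y, u'' t) ∧
    (∀ᵐ x ∂(volume.restrict J), u'' x + c * u' x + h x (u x) = 0)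

/-- positive part `a⁺` of a weight -/
def pospart (a : ℝ → ℝ) : ℝ → ℝ := fun x => max (a x) 0

/-- negative part `a⁻` of a weight -/
def negpart (a : ℝ → ℝ) : ℝ → ℝ := fun x => max (-a x) 0

/-- the two-parameter weight `a_{λ,μ} = λ a⁺ - μ a⁻` -/
def awt (a : ℝ → ℝ) (lam mu : ℝ) : ℝ → ℝ := fun x => lam * pospart a x - mu * negpart a x

/-- the critical ratio `μ#(λ) = λ ∫₀^P a⁺ / ∫₀^P a⁻` -/
def muSharp (a : ℝ → ℝ) (P lam : ℝ) : ℝ :=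
  lam * (∫ x in (0:ℝ)..P, pospart a x) / (∫ x in (0:ℝ)..P, negpart a x)

/-- A `P`-periodic locally integrable weight satisfying `(a*)`, with `m` positivity
intervals `I⁺ᵢ = [σ i, τ i]` separated by negativity intervals `I⁻ᵢ = [τ i, σ (i+1)]`. -/
structure AStar (P : ℝ) (m : ℕ) (a : ℝ → ℝ) (σ τ : ℕ → ℝ) : Prop where
  hP : 0 < P
  hm : 1 ≤ m
  periodic : ∀ x, a (x + P) = a x
  locint : LocallyIntegrable a volume
  σ_one : σ 1 = 0
  σ_last : σ (m + 1) = P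
  lt_στ : ∀ i ∈ Finset.Icc 1 m, σ i < τ i
  lt_τσ : ∀ i ∈ Finset.Icc 1 m, τ i < σ (i + 1)
  pos_ae : ∀ i ∈ Finset.Icc 1 m, ∀ᵐ x ∂(volume.restrict (Icc (σ i) (τ i))), 0 ≤ a x
  pos_ne : ∀ i ∈ Finset.Icc 1 m, ¬ (∀ᵐ x ∂(volume.restrict (Icc (σ i) (τ i))), a x = 0)
  neg_ae : ∀ i ∈ Finset.Icc 1 m, ∀ᵐ x ∂(volume.restrict (Icc (τ i) (σ (i + 1)))), a x ≤ 0
  neg_ne : ∀ i ∈ Finset.Icc 1 m, ¬ (∀ᵐ x ∂(volume.restrict (Icc (τ i) (σ (i + 1)))), a x = 0)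

/-- condition `(g*)` -/
def Gstar (g : ℝ → ℝ) : Prop := g 0 = 0 ∧ g 1 = 0 ∧ ∀ u ∈ Ioo (0:ℝ) 1, 0 < g u

/-- condition `(g₀)`: `g(u)/u → 0` as `u → 0⁺` -/
def Gzero (g : ℝ → ℝ) : Prop := Tendsto (fun u => g u / u) (𝓝[>] (0:ℝ)) (𝓝 0)

/-- condition `(g₁)`: `limsup_{u→1⁻} g(u)/(1-u) < ∞` -/
def Gone (g : ℝ → ℝ) : Prop := ∃ K : ℝ, ∀ᶠ u in 𝓝[<] (1:ℝ), g u / (1 - u) ≤ K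

/-- `P`-periodic Carathéodory solution of `u'' + c u' + w(x) g(u) = 0` on `ℝ`. -/
def PerSol (c : ℝ) (w g u u' : ℝ → ℝ) (P : ℝ) : Prop :=
  CaraSol c (fun x v => w x * g v) u u' univ ∧ ∀ x, u (x + P) = u x
lemma exists_K {g : ℝ → ℝ} (hg : ContinuousOn g (Icc 0 1)) (hgs : Gstar g) (hg1 : Gone g) :
    ∃ K : ℝ, 0 ≤ K ∧ ∀ u ∈ Icc (0:ℝ) 1, 0 ≤ g u ∧ g u ≤ K * (1 - u) := by
  obtain ⟨hg0, hg1', hgpos⟩ := hgs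
  have hnonneg : ∀ u ∈ Icc (0:ℝ) 1, 0 ≤ g u := by
    intro u hu
    rcases eq_or_lt_of_le hu.1 with h0 | h0
    · simp [← h0, hg0]
    rcases eq_or_lt_of_le hu.2 with h1 | h1
    · simp [h1, hg1']
    exact (hgpos u ⟨h0, h1⟩).le
  obtain ⟨K₀, hev⟩ := hg1
  obtain ⟨l, hl, hsub⟩ :=
    (mem_nhdsLT_iff_exists_Ioo_subset' (show (0:ℝ) < 1 by norm_num)).1 hev
  obtain ⟨w, hw, hmax⟩ := isCompact_Icc.exists_isMaxOn
    (nonempty_Icc.2 (by norm_num : (0:ℝ) ≤ 1)) hg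
  set M := g w with hM
  have hM0 : 0 ≤ M := hnonneg w hw
  have hl1 : l < 1 := hl
  refine ⟨max (max K₀ 0) (M / (1 - l)), le_trans (le_max_right _ _) (le_max_left _ _), ?_⟩
  intro u hu
  refine ⟨hnonneg u hu, ?_⟩
  set K := max (max K₀ 0) (M / (1 - l)) with hK
  have hKM : M / (1 - l) ≤ K := le_max_right _ _
  have hKK₀ : K₀ ≤ K := le_trans (le_max_left _ _) (le_max_left _ _)
  have hK0 : 0 ≤ K := le_trans (le_max_right _ _) (le_max_left _ _)
  rcases eq_or_lt_of_le hu.2 with h1 | h1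
  · simp [h1, hg1']
  rcases le_or_gt u l with hul | hul
  · -- u ≤ l : use the max bound
    have h2 : g u ≤ M := hmax hu
    have h3 : 1 - l ≤ 1 - u := by linarith
    have h4 : 0 < 1 - l := by linarith
    have h5 : M ≤ K * (1 - l) := by
      have h6 := mul_le_mul_of_nonneg_right hKM h4.le
      rwa [div_mul_cancel₀ M h4.ne'] at h6
    calc g u ≤ M := h2
    _ ≤ K * (1 - l) := h5
    _ ≤ K * (1 - u) := mul_le_mul_of_nonneg_left h3 hK0
  · -- l < u < 1 : use the limsup bound
    have hmem : u ∈ Ioo l 1 := ⟨hul, h1⟩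
    have := hsub hmem
    have h4 : 0 < 1 - u := by linarith
    have h6 : g u / (1 - u) ≤ K₀ := this
    calc g u = (g u / (1 - u)) * (1 - u) := by field_simp
    _ ≤ K₀ * (1 - u) := mul_le_mul_of_nonneg_right h6 h4.le
    _ ≤ K * (1 - u) := mul_le_mul_of_nonneg_right hKK₀ h4.le

lemma gron_small {k E : ℝ → ℝ} {a b : ℝ} (hab : a ≤ b)
    (hk : IntervalIntegrable k volume a b)
    (hk0 : ∀ t ∈ Icc a b, 0 ≤ k t)
    (hE : ContinuousOn E (Icc a b))
    (hE0 : ∀ t ∈ Icc a b, 0 ≤ E t)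
    (hkE : IntervalIntegrable (fun t => k t * E t) volume a b)
    (key : ∀ y ∈ Icc a b, ∀ x ∈ Icc a b, y ≤ x → E x ≤ E y + ∫ t in y..x, k t * E t)
    (hhalf : (∫ t in a..b, k t) ≤ 1/2) :
    ∀ x ∈ Icc a b, E x ≤ 2 * E a := by
  obtain ⟨m, hm, hmax⟩ := isCompact_Icc.exists_isMaxOn (nonempty_Icc.2 hab) hE
  have hsub : uIcc a m ⊆ uIcc a b := by
    rw [uIcc_of_le hab, uIcc_of_le hm.1]; exact Icc_subset_Icc le_rfl hm.2
  have hsub2 : uIcc m b ⊆ uIcc a b := by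
    rw [uIcc_of_le hab, uIcc_of_le hm.2]; exact Icc_subset_Icc hm.1 le_rfl
  have hM0 : 0 ≤ E m := hE0 m hm
  have h1 : E m ≤ E a + ∫ t in a..m, k t * E t := key a ⟨le_rfl, hab⟩ m hm hm.1
  have h2 : (∫ t in a..m, k t * E t) ≤ ∫ t in a..m, k t * E m := by
    refine intervalIntegral.integral_mono_on hm.1 (hkE.mono_set hsub)
      ((hk.mono_set hsub).mul_const _) (fun t ht => ?_)
    exact mul_le_mul_of_nonneg_left (hmax (Icc_subset_Icc le_rfl hm.2 ht))
      (hk0 t (Icc_subset_Icc le_rfl hm.2 ht))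
  have h3 : (∫ t in a..m, k t) ≤ 1/2 := by
    have hsplit : (∫ t in a..m, k t) + (∫ t in m..b, k t) = ∫ t in a..b, k t :=
      intervalIntegral.integral_add_adjacent_intervals (hk.mono_set hsub) (hk.mono_set hsub2)
    have hnn : 0 ≤ ∫ t in m..b, k t :=
      intervalIntegral.integral_nonneg hm.2 (fun t ht => hk0 t (Icc_subset_Icc hm.1 le_rfl ht))
    linarith
  have h4 : (∫ t in a..m, k t * E m) = (∫ t in a..m, k t) * E m :=
    intervalIntegral.integral_mul_const _ _
  have hMle : E m ≤ 2 * E a := by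
    have : (∫ t in a..m, k t) * E m ≤ (1/2) * E m := mul_le_mul_of_nonneg_right h3 hM0
    nlinarith [h1, h2]
  exact fun x hx => le_trans (hmax hx) hMle

lemma gron_small_left {k E : ℝ → ℝ} {a b : ℝ} (hab : a ≤ b)
    (hk : IntervalIntegrable k volume a b)
    (hk0 : ∀ t ∈ Icc a b, 0 ≤ k t)
    (hE : ContinuousOn E (Icc a b))
    (hE0 : ∀ t ∈ Icc a b, 0 ≤ E t)
    (hkE : IntervalIntegrable (fun t => k t * E t) volume a b)
    (key : ∀ x ∈ Icc a b, ∀ y ∈ Icc a b, x ≤ y → E x ≤ E y + ∫ t in x..y, k t * E t)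
    (hhalf : (∫ t in a..b, k t) ≤ 1/2) :
    ∀ x ∈ Icc a b, E x ≤ 2 * E b := by
  obtain ⟨m, hm, hmax⟩ := isCompact_Icc.exists_isMaxOn (nonempty_Icc.2 hab) hE
  have hsub : uIcc a m ⊆ uIcc a b := by
    rw [uIcc_of_le hab, uIcc_of_le hm.1]; exact Icc_subset_Icc le_rfl hm.2
  have hsub2 : uIcc m b ⊆ uIcc a b := by
    rw [uIcc_of_le hab, uIcc_of_le hm.2]; exact Icc_subset_Icc hm.1 le_rfl
  have hM0 : 0 ≤ E m := hE0 m hm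
  have h1 : E m ≤ E b + ∫ t in m..b, k t * E t := key m hm b ⟨hab, le_rfl⟩ hm.2
  have h2 : (∫ t in m..b, k t * E t) ≤ ∫ t in m..b, k t * E m := by
    refine intervalIntegral.integral_mono_on hm.2 (hkE.mono_set hsub2)
      ((hk.mono_set hsub2).mul_const _) (fun t ht => ?_)
    exact mul_le_mul_of_nonneg_left (hmax (Icc_subset_Icc hm.1 le_rfl ht))
      (hk0 t (Icc_subset_Icc hm.1 le_rfl ht))
  have h3 : (∫ t in m..b, k t) ≤ 1/2 := by
    have hsplit : (∫ t in a..m, k t) + (∫ t in m..b, k t) = ∫ t in a..b, k t :=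
      intervalIntegral.integral_add_adjacent_intervals (hk.mono_set hsub) (hk.mono_set hsub2)
    have hnn : 0 ≤ ∫ t in a..m, k t :=
      intervalIntegral.integral_nonneg hm.1 (fun t ht => hk0 t (Icc_subset_Icc le_rfl hm.2 ht))
    linarith
  have h4 : (∫ t in m..b, k t * E m) = (∫ t in m..b, k t) * E m :=
    intervalIntegral.integral_mul_const _ _
  have hMle : E m ≤ 2 * E b := by
    have : (∫ t in m..b, k t) * E m ≤ (1/2) * E m := mul_le_mul_of_nonneg_right h3 hM0
    nlinarith [h1, h2]
  exact fun x hx => le_trans (hmax hx) hMle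

lemma gron_right {k E : ℝ → ℝ} : ∀ (n : ℕ) (a b : ℝ), a ≤ b →
    IntervalIntegrable k volume a b →
    (∀ t ∈ Icc a b, 0 ≤ k t) →
    ContinuousOn E (Icc a b) →
    (∀ t ∈ Icc a b, 0 ≤ E t) →
    IntervalIntegrable (fun t => k t * E t) volume a b →
    (∀ y ∈ Icc a b, ∀ x ∈ Icc a b, y ≤ x → E x ≤ E y + ∫ t in y..x, k t * E t) →
    (∫ t in a..b, k t) ≤ (n + 1) / 2 →
    ∀ x ∈ Icc a b, E x ≤ 2 ^ (n + 1) * E a := by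
  intro n
  induction n with
  | zero =>
    intro a b hab hk hk0 hE hE0 hkE key hhalf x hx
    simpa using gron_small hab hk hk0 hE hE0 hkE key (by simpa using hhalf) x hx
  | succ n ih =>
    intro a b hab hk hk0 hE hE0 hkE key hhalf x hx
    have hEa : 0 ≤ E a := hE0 a ⟨le_rfl, hab⟩
    have h2pow : (2:ℝ) ≤ 2 ^ (n + 1 + 1) := by
      calc (2:ℝ) = 2 ^ 1 := (pow_one 2).symm
      _ ≤ 2 ^ (n + 1 + 1) := pow_le_pow_right₀ one_le_two (by omega)
    by_cases hsm : (∫ t in a..b, k t) ≤ 1/2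
    · have := gron_small hab hk hk0 hE hE0 hkE key hsm x hx
      nlinarith
    · push_neg at hsm
      -- find c with ∫_a^c k = 1/2
      have hFcont : ContinuousOn (fun x => ∫ t in a..x, k t) (Icc a b) := by
        have := intervalIntegral.continuousOn_primitive_interval
          (μ := volume) (f := k) (a := a) (b := b) ?_
        · rwa [uIcc_of_le hab] at this
        · rw [uIcc_of_le hab]
          exact (intervalIntegrable_iff_integrableOn_Icc_of_le hab).1 hk
      obtain ⟨c, hc, hFc⟩ : ∃ c ∈ Icc a b, (∫ t in a..c, k t) = 1/2 := by
        have h0 : (1/2 : ℝ) ∈ Icc (∫ t in a..a, k t) (∫ t in a..b, k t) := by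
          simp only [intervalIntegral.integral_same]
          exact ⟨by norm_num, hsm.le⟩
        obtain ⟨c, hc, hFc⟩ := intermediate_value_Icc hab hFcont h0
        exact ⟨c, hc, hFc⟩
      have hsubL : uIcc a c ⊆ uIcc a b := by
        rw [uIcc_of_le hab, uIcc_of_le hc.1]; exact Icc_subset_Icc le_rfl hc.2
      have hsubR : uIcc c b ⊆ uIcc a b := by
        rw [uIcc_of_le hab, uIcc_of_le hc.2]; exact Icc_subset_Icc hc.1 le_rfl
      have hIccL : Icc a c ⊆ Icc a b := Icc_subset_Icc le_rfl hc.2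
      have hIccR : Icc c b ⊆ Icc a b := Icc_subset_Icc hc.1 le_rfl
      have hsmall : ∀ y ∈ Icc a c, E y ≤ 2 * E a := by
        refine gron_small hc.1 (hk.mono_set hsubL) (fun t ht => hk0 t (hIccL ht))
          (hE.mono hIccL) (fun t ht => hE0 t (hIccL ht)) (hkE.mono_set hsubL)
          (fun y hy x' hx' hyx => key y (hIccL hy) x' (hIccL hx') hyx) (le_of_eq hFc)
      have hsplit : (∫ t in a..c, k t) + (∫ t in c..b, k t) = ∫ t in a..b, k t :=
        intervalIntegral.integral_add_adjacent_intervals (hk.mono_set hsubL) (hk.mono_set hsubR)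
      have hrest : (∫ t in c..b, k t) ≤ (n + 1) / 2 := by
        push_cast at hhalf ⊢
        linarith
      have hih := ih c b hc.2 (hk.mono_set hsubR) (fun t ht => hk0 t (hIccR ht))
        (hE.mono hIccR) (fun t ht => hE0 t (hIccR ht)) (hkE.mono_set hsubR)
        (fun y hy x' hx' hyx => key y (hIccR hy) x' (hIccR hx') hyx) hrest
      rcases le_total x c with hxc | hcx
      · have := hsmall x ⟨hx.1, hxc⟩
        nlinarith
      · have h1 := hih x ⟨hcx, hx.2⟩
        have h2 := hsmall c ⟨hc.1, le_rfl⟩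
        have hp : (0:ℝ) < 2 ^ (n + 1) := by positivity
        calc E x ≤ 2 ^ (n+1) * E c := h1
          _ ≤ 2 ^ (n+1) * (2 * E a) := by nlinarith
          _ = 2 ^ (n+1+1) * E a := by ring

lemma gron_left {k E : ℝ → ℝ} : ∀ (n : ℕ) (a b : ℝ), a ≤ b →
    IntervalIntegrable k volume a b →
    (∀ t ∈ Icc a b, 0 ≤ k t) →
    ContinuousOn E (Icc a b) →
    (∀ t ∈ Icc a b, 0 ≤ E t) →
    IntervalIntegrable (fun t => k t * E t) volume a b →
    (∀ x ∈ Icc a b, ∀ y ∈ Icc a b, x ≤ y → E x ≤ E y + ∫ t in x..y, k t * E t) →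
    (∫ t in a..b, k t) ≤ (n + 1) / 2 →
    ∀ x ∈ Icc a b, E x ≤ 2 ^ (n + 1) * E b := by
  intro n
  induction n with
  | zero =>
    intro a b hab hk hk0 hE hE0 hkE key hhalf x hx
    simpa using gron_small_left hab hk hk0 hE hE0 hkE key (by simpa using hhalf) x hx
  | succ n ih =>
    intro a b hab hk hk0 hE hE0 hkE key hhalf x hx
    have hEb : 0 ≤ E b := hE0 b ⟨hab, le_rfl⟩
    have h2pow : (2:ℝ) ≤ 2 ^ (n + 1 + 1) := by
      calc (2:ℝ) = 2 ^ 1 := (pow_one 2).symm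
      _ ≤ 2 ^ (n + 1 + 1) := pow_le_pow_right₀ one_le_two (by omega)
    by_cases hsm : (∫ t in a..b, k t) ≤ 1/2
    · have := gron_small_left hab hk hk0 hE hE0 hkE key hsm x hx
      nlinarith
    · push_neg at hsm
      have hFcont : ContinuousOn (fun x => ∫ t in x..b, k t) (Icc a b) := by
        have := intervalIntegral.continuousOn_primitive_interval_left
          (μ := volume) (f := k) (a := a) (b := b) ?_
        · rwa [uIcc_of_le hab] at this
        · rw [uIcc_of_le hab]
          exact (intervalIntegrable_iff_integrableOn_Icc_of_le hab).1 hk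
      obtain ⟨c, hc, hFc⟩ : ∃ c ∈ Icc a b, (∫ t in c..b, k t) = 1/2 := by
        have h0 : (1/2 : ℝ) ∈ Icc (∫ t in b..b, k t) (∫ t in a..b, k t) := by
          simp only [intervalIntegral.integral_same]
          exact ⟨by norm_num, hsm.le⟩
        obtain ⟨c, hc, hFc⟩ := intermediate_value_Icc' hab hFcont h0
        exact ⟨c, hc, hFc⟩
      have hsubL : uIcc a c ⊆ uIcc a b := by
        rw [uIcc_of_le hab, uIcc_of_le hc.1]; exact Icc_subset_Icc le_rfl hc.2
      have hsubR : uIcc c b ⊆ uIcc a b := by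
        rw [uIcc_of_le hab, uIcc_of_le hc.2]; exact Icc_subset_Icc hc.1 le_rfl
      have hIccL : Icc a c ⊆ Icc a b := Icc_subset_Icc le_rfl hc.2
      have hIccR : Icc c b ⊆ Icc a b := Icc_subset_Icc hc.1 le_rfl
      have hsmall : ∀ y ∈ Icc c b, E y ≤ 2 * E b := by
        refine gron_small_left hc.2 (hk.mono_set hsubR) (fun t ht => hk0 t (hIccR ht))
          (hE.mono hIccR) (fun t ht => hE0 t (hIccR ht)) (hkE.mono_set hsubR)
          (fun y hy x' hx' hyx => key y (hIccR hy) x' (hIccR hx') hyx) (le_of_eq hFc)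
      have hsplit : (∫ t in a..c, k t) + (∫ t in c..b, k t) = ∫ t in a..b, k t :=
        intervalIntegral.integral_add_adjacent_intervals (hk.mono_set hsubL) (hk.mono_set hsubR)
      have hrest : (∫ t in a..c, k t) ≤ (n + 1) / 2 := by
        push_cast at hhalf ⊢
        linarith
      have hih := ih a c hc.1 (hk.mono_set hsubL) (fun t ht => hk0 t (hIccL ht))
        (hE.mono hIccL) (fun t ht => hE0 t (hIccL ht)) (hkE.mono_set hsubL)
        (fun y hy x' hx' hyx => key y (hIccL hy) x' (hIccL hx') hyx) hrest
      rcases le_total x c with hxc | hcx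
      · have h1 := hih x ⟨hx.1, hxc⟩
        have h2 := hsmall c ⟨le_rfl, hc.2⟩
        have hp : (0:ℝ) < 2 ^ (n + 1) := by positivity
        calc E x ≤ 2 ^ (n+1) * E c := h1
          _ ≤ 2 ^ (n+1) * (2 * E b) := by nlinarith
          _ = 2 ^ (n+1+1) * E b := by ring
      · have := hsmall x ⟨hcx, hx.2⟩
        nlinarith

/-- Lemma 2.6 (lem-Re): solutions with a large interior maximum stay uniformly
close to 1 with small derivative. -/
theorem statement11 (c : ℝ) (g : ℝ → ℝ)
    (hg : ContinuousOn g (Icc 0 1)) (hgs : Gstar g) (hg1 : Gone g)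
    (α β : ℝ) (hαβ : α ≤ β) (b : ℝ → ℝ) (hb : IntegrableOn b (Icc α β)) :
    ∀ ε ∈ Ioo (0:ℝ) 1, ∃ Rε ∈ Ioo (0:ℝ) 1, ∀ θ ∈ Ioc (0:ℝ) 1, ∀ u u' : ℝ → ℝ,
      CaraSol c (fun x v => θ * b x * g v) u u' (Icc α β) →
      (∀ x ∈ Icc α β, u x ∈ Icc (0:ℝ) 1) →
      ∀ xh ∈ Icc α β, Rε ≤ u xh → u' xh = 0 →
        ∀ x ∈ Icc α β, 1 - ε ≤ u x ∧ |u' x| ≤ ε := by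
  obtain ⟨K, hK0, hKb⟩ := exists_K hg hgs hg1
  set k : ℝ → ℝ := fun t => 1 + |c| + K * |b t| with hkdef
  have hkval : ∀ t, k t = 1 + |c| + K * |b t| := fun t => rfl
  have hk0 : ∀ t, (0:ℝ) ≤ k t := by
    intro t; rw [hkval]; positivity
  have hkint : IntegrableOn k (Icc α β) := by
    have h1 : IntegrableOn (fun _ : ℝ => 1 + |c|) (Icc α β) :=
      integrableOn_const measure_Icc_lt_top.ne
    have h2 : IntegrableOn (fun t => K * |b t|) (Icc α β) := hb.abs.const_mul K
    exact h1.add h2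
  have hkII : IntervalIntegrable k volume α β :=
    (intervalIntegrable_iff_integrableOn_Icc_of_le hαβ).2 hkint
  set T := ∫ t in α..β, k t with hT
  set N := ⌈2 * T⌉₊ with hN
  have hTN : T ≤ (N + 1) / 2 := by
    have h := Nat.le_ceil (2 * T)
    rw [← hN] at h
    linarith
  set C := (2:ℝ) ^ (N + 1) with hC
  have hC0 : (0:ℝ) < C := by positivity
  have huIcc : uIcc α β = Icc α β := uIcc_of_le hαβ
  intro ε hε
  refine ⟨max (1 - ε / (2*C)) (1/2), ⟨lt_of_lt_of_le one_half_pos (le_max_right _ _), ?_⟩, ?_⟩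
  · apply max_lt _ (by norm_num)
    have : 0 < ε / (2*C) := div_pos hε.1 (by positivity)
    linarith
  intro θ hθ u u' hsol hbox xh hxh hRu hu'0 x hx
  obtain ⟨hderiv, hu'cont, u'', hu''eq, hae⟩ := hsol
  have hucont : ContinuousOn u (Icc α β) := fun t ht => (hderiv t ht).continuousWithinAt
  set E : ℝ → ℝ := fun t => (1 - u t) + |u' t| with hEdef
  have hEval : ∀ t, E t = (1 - u t) + |u' t| := fun t => rfl
  have hEcont : ContinuousOn E (Icc α β) := (continuousOn_const.sub hucont).add hu'cont.abs
  have hE0 : ∀ t ∈ Icc α β, 0 ≤ E t := by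
    intro t ht
    rw [hEval]
    have := (hbox t ht).2
    have := abs_nonneg (u' t)
    linarith
  have hu'II : IntervalIntegrable u' volume α β := by
    apply ContinuousOn.intervalIntegrable
    rw [huIcc]; exact hu'cont
  have hkEII : IntervalIntegrable (fun t => k t * E t) volume α β :=
    hkII.mul_continuousOn (by rw [huIcc]; exact hEcont)
  have hguc : ContinuousOn (fun t => g (u t)) (Icc α β) :=
    hg.comp hucont (fun t ht => hbox t ht)
  have hbII : IntervalIntegrable b volume α β :=
    (intervalIntegrable_iff_integrableOn_Icc_of_le hαβ).2 hb
  have hrhsII : IntervalIntegrable (fun t => -(c * u' t + θ * b t * g (u t))) volume α β := by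
    apply IntervalIntegrable.neg
    apply IntervalIntegrable.add
    · exact (continuousOn_const.mul (by rw [huIcc]; exact hu'cont)).intervalIntegrable
    · exact (hbII.const_mul θ).mul_continuousOn (by rw [huIcc]; exact hguc)
  have hu''int : IntegrableOn u'' (Icc α β) := by
    apply Integrable.congr ((intervalIntegrable_iff_integrableOn_Icc_of_le hαβ).1 hrhsII)
    filter_upwards [hae] with t ht
    linarith
  have hu''II : IntervalIntegrable u'' volume α β :=
    (intervalIntegrable_iff_integrableOn_Icc_of_le hαβ).2 hu''int
  have hptw : ∀ᵐ t ∂(volume.restrict (Icc α β)), |u' t| + |u'' t| ≤ k t * E t := by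
    filter_upwards [hae, ae_restrict_mem measurableSet_Icc] with t hteq htmem
    have hbox' := hbox t htmem
    obtain ⟨hgnn, hgle⟩ := hKb (u t) hbox'
    have h1mu : 0 ≤ 1 - u t := by linarith [hbox'.2]
    have hu''t : u'' t = -(c * u' t + θ * b t * g (u t)) := by linarith
    have h1 : |u'' t| ≤ |c| * |u' t| + K * |b t| * (1 - u t) := by
      rw [hu''t, abs_neg]
      calc |c * u' t + θ * b t * g (u t)| ≤ |c * u' t| + |θ * b t * g (u t)| := abs_add_le _ _
      _ = |c| * |u' t| + θ * |b t| * g (u t) := by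
          rw [abs_mul, abs_mul, abs_mul, abs_of_pos hθ.1, abs_of_nonneg hgnn]
      _ ≤ |c| * |u' t| + K * |b t| * (1 - u t) := by
          have hb0 := abs_nonneg (b t)
          nlinarith [hθ.1, hθ.2, hgle, hgnn, mul_nonneg hb0 hgnn]
    have hb0 := abs_nonneg (b t)
    have hc0 := abs_nonneg c
    have hv0 := abs_nonneg (u' t)
    have hKb0 : 0 ≤ K * |b t| := mul_nonneg hK0 hb0
    rw [hkval, hEval]
    nlinarith [mul_nonneg hKb0 hv0, mul_nonneg hc0 h1mu]
  have hstep : ∀ p ∈ Icc α β, ∀ q ∈ Icc α β, p ≤ q →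
      |u q - u p| + |u' q - u' p| ≤ ∫ t in p..q, k t * E t := by
    intro p hp q hq hpq
    have hsubpq : uIcc p q ⊆ uIcc α β := by
      rw [huIcc, uIcc_of_le hpq]; exact Icc_subset_Icc hp.1 hq.2
    have hIccpq : Icc p q ⊆ Icc α β := Icc_subset_Icc hp.1 hq.2
    have hftc : ∫ t in p..q, u' t = u q - u p := by
      apply intervalIntegral.integral_eq_sub_of_hasDeriv_right_of_le hpq (hucont.mono hIccpq)
        ?_ (hu'II.mono_set hsubpq)
      intro t ht
      have htJ : t ∈ Icc α β := ⟨hp.1.trans ht.1.le, ht.2.le.trans hq.2⟩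
      have hmem : Icc α β ∈ 𝓝 t :=
        Icc_mem_nhds (lt_of_le_of_lt hp.1 ht.1) (lt_of_lt_of_le ht.2 hq.2)
      exact ((hderiv t htJ).hasDerivAt hmem).hasDerivWithinAt
    have hftc' : u' q - u' p = ∫ t in p..q, u'' t := hu''eq p hp q hq
    have habs1 : |u q - u p| ≤ ∫ t in p..q, |u' t| := by
      rw [← hftc]
      exact intervalIntegral.abs_integral_le_integral_abs hpq
    have habs2 : |u' q - u' p| ≤ ∫ t in p..q, |u'' t| := by
      rw [hftc']
      exact intervalIntegral.abs_integral_le_integral_abs hpq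
    have hsum : (∫ t in p..q, |u' t|) + (∫ t in p..q, |u'' t|)
        = ∫ t in p..q, (|u' t| + |u'' t|) :=
      (intervalIntegral.integral_add (hu'II.abs.mono_set hsubpq)
        (hu''II.abs.mono_set hsubpq)).symm
    have hmono : (∫ t in p..q, (|u' t| + |u'' t|)) ≤ ∫ t in p..q, k t * E t := by
      apply intervalIntegral.integral_mono_ae_restrict hpq
        ((hu'II.abs.mono_set hsubpq).add (hu''II.abs.mono_set hsubpq))
        (hkEII.mono_set hsubpq)
      exact ae_restrict_of_ae_restrict_of_subset hIccpq hptw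
    linarith
  have hkey : ∀ y ∈ Icc α β, ∀ z ∈ Icc α β, y ≤ z →
      E z ≤ E y + ∫ t in y..z, k t * E t := by
    intro y hy z hz hyz
    have h := hstep y hy z hz hyz
    have h1 : u y - u z ≤ |u z - u y| := by rw [abs_sub_comm]; exact le_abs_self _
    have h2 : |u' z| - |u' y| ≤ |u' z - u' y| := abs_sub_abs_le_abs_sub _ _
    rw [hEval, hEval]
    linarith
  have hkey' : ∀ z ∈ Icc α β, ∀ y ∈ Icc α β, z ≤ y →
      E z ≤ E y + ∫ t in z..y, k t * E t := by
    intro z hz y hy hzy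
    have h := hstep z hz y hy hzy
    have h1 : u y - u z ≤ |u y - u z| := le_abs_self _
    have h2 : |u' z| - |u' y| ≤ |u' y - u' z| := by
      rw [abs_sub_comm]; exact abs_sub_abs_le_abs_sub _ _
    rw [hEval, hEval]
    linarith
  have hExh : E xh ≤ ε / (2*C) := by
    have h2 : 1 - max (1 - ε/(2*C)) (1/2) ≤ ε/(2*C) := by
      have := le_max_left (1 - ε/(2*C)) (1/2); linarith
    rw [hEval, hu'0, abs_zero]
    linarith
  have hEbound : E x ≤ C * E xh := by
    rcases le_total x xh with hxxh | hxhx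
    · have hsubL : uIcc α xh ⊆ uIcc α β := by
        rw [huIcc, uIcc_of_le hxh.1]; exact Icc_subset_Icc le_rfl hxh.2
      have hsubR : uIcc xh β ⊆ uIcc α β := by
        rw [huIcc, uIcc_of_le hxh.2]; exact Icc_subset_Icc hxh.1 le_rfl
      have hIccL : Icc α xh ⊆ Icc α β := Icc_subset_Icc le_rfl hxh.2
      have hint : (∫ t in α..xh, k t) ≤ (N + 1)/2 := by
        have hsplit := intervalIntegral.integral_add_adjacent_intervals
          (hkII.mono_set hsubL) (hkII.mono_set hsubR)
        have hnn : 0 ≤ ∫ t in xh..β, k t :=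
          intervalIntegral.integral_nonneg hxh.2 (fun t _ => hk0 t)
        rw [← hT] at hsplit
        linarith
      exact gron_left N α xh hxh.1 (hkII.mono_set hsubL) (fun t _ => hk0 t)
        (hEcont.mono hIccL) (fun t ht => hE0 t (hIccL ht)) (hkEII.mono_set hsubL)
        (fun p hp q hq hpq => hkey' p (hIccL hp) q (hIccL hq) hpq) hint x ⟨hx.1, hxxh⟩
    · have hsubL : uIcc α xh ⊆ uIcc α β := by
        rw [huIcc, uIcc_of_le hxh.1]; exact Icc_subset_Icc le_rfl hxh.2
      have hsubR : uIcc xh β ⊆ uIcc α β := by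
        rw [huIcc, uIcc_of_le hxh.2]; exact Icc_subset_Icc hxh.1 le_rfl
      have hIccR : Icc xh β ⊆ Icc α β := Icc_subset_Icc hxh.1 le_rfl
      have hint : (∫ t in xh..β, k t) ≤ (N + 1)/2 := by
        have hsplit := intervalIntegral.integral_add_adjacent_intervals
          (hkII.mono_set hsubL) (hkII.mono_set hsubR)
        have hnn : 0 ≤ ∫ t in α..xh, k t :=
          intervalIntegral.integral_nonneg hxh.1 (fun t _ => hk0 t)
        rw [← hT] at hsplit
        linarith
      exact gron_right N xh β hxh.2 (hkII.mono_set hsubR) (fun t _ => hk0 t)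
        (hEcont.mono hIccR) (fun t ht => hE0 t (hIccR ht)) (hkEII.mono_set hsubR)
        (fun p hp q hq hpq => hkey p (hIccR hp) q (hIccR hq) hpq) hint x ⟨hxhx, hx.2⟩
  have hfinal : E x ≤ ε / 2 := by
    calc E x ≤ C * E xh := hEbound
    _ ≤ C * (ε/(2*C)) := mul_le_mul_of_nonneg_left hExh hC0.le
    _ = ε/2 := by field_simp
  have hEx := hEval x
  have hv0 := abs_nonneg (u' x)
  have hbx := (hbox x hx).2
  constructor
  · have := hε.1
    rw [hEx] at hfinal
    linarith
  · rw [hEx] at hfinal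
    linarith
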